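/- (Jacobi–Trudi identity for the classes k*Ω_μ^T) Let g ≥ 1 and let μ = (μ_1 ≥ μ_2 ≥ ⋯ ≥ μ_g ≥ 0) be a partition with at most g parts. In the polynomial ring ℚ[x_1, …, x_g, ψ] the following determinant identity holds: det[ A_{ij} ]_{1≤i,j≤g} = (Π_{1≤i<j≤g} (x_i − x_j)) · det[ B_{ij} ]_{1≤i,j≤g}, where A_{ij} = Π_{m=0}^{μ_j + g − j − 1} (x_i + mψ) (an empty product, occurring exactly when μ_j + g − j = 0, equals 1), and B_{ij} = Σ_{a+b = μ_i + j − i, a,b ≥ 0} h_a(x_1, …, x_g) · e_b(0, 1, …, μ_i − i + g − 1) · ψ^b, the sum being empty (so B_{ij} = 0) when μ_i + j − i < 0. -/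

import Mathlib

open Finset

/-- The complete homogeneous symmetric polynomial `h_a(x 1, …, x g)` of degree `a`. -/
def completeHomog {R : Type*} [CommRing R] {g : ℕ} (x : Fin g → R) (a : ℕ) : R :=
  ∑ m ∈ (Finset.univ : Finset (Fin g)).sym a, ((m : Multiset (Fin g)).map x).prod

/-- The elementary symmetric polynomial `e_b(0, 1, …, N − 1)` of degree `b` evaluated at
the first `N` nonnegative integers (so `e_b(0,1,…,N)` in the paper is `elemNat (N+1) b`);
it equals `1` when `b = 0` and `0` when `b > N`. -/
def elemNat {R : Type*} [CommRing R] (N b : ℕ) : R :=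
  ∑ t ∈ (Finset.range N).powersetCard b, ∏ m ∈ t, (m : R)

open PowerSeries


variable {R : Type*} [CommRing R]

/-- geometric series inverse -/
lemma aux_geom (r : R) :
    ((1 : PowerSeries R) - PowerSeries.C r * PowerSeries.X) *
      PowerSeries.mk (fun n => r ^ n) = 1 := by
  have h : ((1 : PowerSeries R) - PowerSeries.C r * PowerSeries.X) *
      PowerSeries.mk (fun n => r ^ n)
      = PowerSeries.mk (fun n => r ^ n)
        - PowerSeries.C r * (PowerSeries.mk (fun n => r ^ n) * PowerSeries.X) := by ring
  rw [h]
  ext n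
  cases n with
  | zero => simp
  | succ n =>
    simp [PowerSeries.coeff_succ_mul_X, pow_succ, mul_comm]

lemma aux_coeff_prod_one_add {ι : Type*} [DecidableEq ι] (s : Finset ι) (f : ι → R) (k : ℕ) :
    PowerSeries.coeff k (∏ i ∈ s, ((1 : PowerSeries R) + PowerSeries.C (f i) * PowerSeries.X))
      = ∑ t ∈ s.powersetCard k, ∏ i ∈ t, f i := by
  have h1 : (∏ i ∈ s, ((1 : PowerSeries R) + PowerSeries.C (f i) * PowerSeries.X))
      = ∑ t ∈ s.powerset, PowerSeries.C (∏ i ∈ t, f i) * PowerSeries.X ^ t.card := by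
    have := Finset.prod_add (fun i => PowerSeries.C (f i) * PowerSeries.X)
      (fun _ => (1 : PowerSeries R)) s
    rw [show (fun i => (1:PowerSeries R) + PowerSeries.C (f i) * PowerSeries.X)
        = fun i => PowerSeries.C (f i) * PowerSeries.X + 1 from by funext i; ring] at *
    rw [this]
    refine Finset.sum_congr rfl fun t ht => ?_
    rw [Finset.prod_const_one, mul_one, Finset.prod_mul_distrib, Finset.prod_const,
      ← map_prod]
  rw [h1, map_sum]
  rw [Finset.powersetCard_eq_filter, Finset.sum_filter]
  refine Finset.sum_congr rfl fun t ht => ?_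
  rw [PowerSeries.coeff_C_mul, PowerSeries.coeff_X_pow]
  by_cases h : t.card = k
  · simp [h]
  · rw [if_neg h, if_neg (fun hh => h hh.symm), mul_zero]

/-- key evaluation: coefficient of product of (1 - f i X) times geometric series -/
lemma aux_RL {ι : Type*} [DecidableEq ι] (s : Finset ι) (f : ι → R) (y : R) (r : ℕ) :
    PowerSeries.coeff (s.card + r)
      ((∏ i ∈ s, ((1 : PowerSeries R) - PowerSeries.C (f i) * PowerSeries.X)) *
        PowerSeries.mk (fun n => y ^ n))
      = (∏ i ∈ s, (y - f i)) * y ^ r := by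
  induction s using Finset.induction generalizing r with
  | empty => simp
  | @insert a s ha ih =>
    rw [Finset.prod_insert ha, Finset.prod_insert ha, Finset.card_insert_of_notMem ha]
    set G := (∏ i ∈ s, ((1 : PowerSeries R) - PowerSeries.C (f i) * PowerSeries.X)) *
        PowerSeries.mk (fun n => y ^ n) with hG
    have h : ((1 : PowerSeries R) - PowerSeries.C (f a) * PowerSeries.X) *
        (∏ i ∈ s, ((1 : PowerSeries R) - PowerSeries.C (f i) * PowerSeries.X)) *
        PowerSeries.mk (fun n => y ^ n)
        = G - PowerSeries.C (f a) * (G * PowerSeries.X) := by rw [hG]; ring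
    rw [h, map_sub, PowerSeries.coeff_C_mul]
    have e1 : s.card + 1 + r = s.card + (r + 1) := by omega
    have e2 : s.card + 1 + r = (s.card + r) + 1 := by omega
    rw [e2, PowerSeries.coeff_succ_mul_X, ih r, ← e2, e1, ih (r+1)]
    ring

/-- the convolution lemma -/
lemma aux_CL (g : ℕ) (G P : PowerSeries R)
    (hP : ∀ k, g ≤ k → PowerSeries.coeff k P = 0) (d e : ℕ) (he : e < g) :
    ∑ j ∈ Finset.range g,
        (if e ≤ d + j then PowerSeries.coeff (d + j - e) G else 0) *
          PowerSeries.coeff (g - 1 - j) P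
      = PowerSeries.coeff (d + (g - (e + 1))) (G * P) := by
  rw [PowerSeries.coeff_mul, Finset.Nat.sum_antidiagonal_eq_sum_range_succ_mk]
  set T := d + (g - (e + 1)) with hT
  refine Finset.sum_bij_ne_zero (i := fun j _ _ => d + j - e) ?_ ?_ ?_ ?_
  · intro j hj hne
    simp only [Finset.mem_range] at hj ⊢
    omega
  · intro j₁ h₁ hne₁ j₂ h₂ hne₂ heq
    simp only [Finset.mem_range] at h₁ h₂
    have g1 : e ≤ d + j₁ := by
      by_contra hc; rw [if_neg hc, zero_mul] at hne₁; exact hne₁ rfl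
    have g2 : e ≤ d + j₂ := by
      by_contra hc; rw [if_neg hc, zero_mul] at hne₂; exact hne₂ rfl
    have heq' : d + j₁ - e = d + j₂ - e := heq
    omega
  · intro k hk hne
    simp only [Finset.mem_range] at hk
    have hk2 : T - k < g := by
      by_contra hc
      rw [hP (T - k) (by omega), mul_zero] at hne
      exact hne rfl
    have hj : g - 1 - (T - k) < g := by omega
    have hguard : e ≤ d + (g - 1 - (T - k)) := by omega
    refine ⟨g - 1 - (T - k), by simp only [Finset.mem_range]; omega, ?_, ?_⟩
    · rw [if_pos hguard]
      have hk' : d + (g - 1 - (T - k)) - e = k := by omega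
      have hk'' : g - 1 - (g - 1 - (T - k)) = T - k := by omega
      rw [hk', hk'']
      exact hne
    · exact (by omega : d + (g - 1 - (T - k)) - e = k)
  · intro j hj hne
    simp only [Finset.mem_range] at hj
    have g1 : e ≤ d + j := by
      by_contra hc; rw [if_neg hc, zero_mul] at hne; exact hne rfl
    rw [if_pos g1]
    have e2 : T - (d + j - e) = g - 1 - j := by omega
    show _ = PowerSeries.coeff (d + j - e) G * PowerSeries.coeff (T - (d + j - e)) P
    rw [e2]

lemma aux_hcoeff {g a : ℕ} (x : Fin g → R) :
    PowerSeries.coeff a (∏ i : Fin g, PowerSeries.mk (fun n => x i ^ n))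
      = ∑ m ∈ (Finset.univ : Finset (Fin g)).sym a, ((m : Multiset (Fin g)).map x).prod := by
  rw [PowerSeries.coeff_prod]
  simp only [PowerSeries.coeff_mk]
  refine (Finset.sum_bij (i := fun (m : Sym (Fin g) a) _ =>
      Multiset.toFinsupp (m : Multiset (Fin g))) ?_ ?_ ?_ ?_).symm
  · intro m _
    rw [Finset.mem_finsuppAntidiag]
    refine ⟨?_, fun z _ => Finset.mem_univ z⟩
    have h1 : ∑ i : Fin g, (Multiset.toFinsupp (m : Multiset (Fin g))) i
        = Multiset.card (m : Multiset (Fin g)) := by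
      simp only [Multiset.toFinsupp_apply]
      rw [← Multiset.toFinset_sum_count_eq]
      exact (Finset.sum_subset (Finset.subset_univ _)
        (fun z _ hz => Multiset.count_eq_zero.mpr
          (fun hmem => hz (Multiset.mem_toFinset.mpr hmem)))).symm
    rw [h1]
    exact m.2
  · intro m₁ _ m₂ _ h
    replace h : Multiset.toFinsupp (m₁ : Multiset (Fin g))
        = Multiset.toFinsupp (m₂ : Multiset (Fin g)) := h
    have := congrArg Finsupp.toMultiset h
    simp only [Multiset.toFinsupp_toMultiset] at this
    exact Sym.coe_injective this
  · intro l hl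
    rw [Finset.mem_finsuppAntidiag] at hl
    have hcard : Multiset.card (Finsupp.toMultiset l) = a := by
      rw [Finsupp.card_toMultiset]
      rw [Finsupp.sum_fintype _ _ (fun i => rfl)]
      exact hl.1
    refine ⟨⟨Finsupp.toMultiset l, hcard⟩,
      Finset.mem_sym_iff.mpr (fun z _ => Finset.mem_univ z), ?_⟩
    show Multiset.toFinsupp (Finsupp.toMultiset l) = l
    exact Finsupp.toMultiset_toFinsupp l
  · intro m _
    show ((m : Multiset (Fin g)).map x).prod
      = ∏ i : Fin g, x i ^ (Multiset.toFinsupp (m : Multiset (Fin g))) i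
    rw [Finset.prod_multiset_map_count]
    simp only [Multiset.toFinsupp_apply]
    refine Finset.prod_subset (Finset.subset_univ _) (fun z _ hz => ?_)
    rw [Multiset.count_eq_zero.mpr (fun hmem => hz (Multiset.mem_toFinset.mpr hmem)), pow_zero]

lemma aux_pairs_lt {β : Type*} [CommMonoid β] {n : ℕ} (F : Fin n → Fin n → β) :
    ∏ p ∈ (Finset.univ : Finset (Fin n × Fin n)).filter (fun p => p.1 < p.2), F p.1 p.2
      = ∏ i : Fin n, ∏ j ∈ Finset.Ioi i, F i j := by
  rw [Finset.prod_sigma']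
  refine Finset.prod_nbij' (i := fun p => (⟨p.1, p.2⟩ : Σ _ : Fin n, Fin n))
    (j := fun q => (q.1, q.2)) ?_ ?_ ?_ ?_ ?_ <;>
    simp (config := { contextual := true }) [Finset.mem_sigma, Finset.mem_Ioi]

lemma aux_pairs_gt {β : Type*} [CommMonoid β] {n : ℕ} (F : Fin n → Fin n → β) :
    ∏ p ∈ (Finset.univ : Finset (Fin n × Fin n)).filter (fun p => p.2 < p.1), F p.1 p.2
      = ∏ i : Fin n, ∏ j ∈ Finset.Iio i, F i j := by
  rw [Finset.prod_sigma']
  refine Finset.prod_nbij' (i := fun p => (⟨p.1, p.2⟩ : Σ _ : Fin n, Fin n))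
    (j := fun q => (q.1, q.2)) ?_ ?_ ?_ ?_ ?_ <;>
    simp (config := { contextual := true }) [Finset.mem_sigma, Finset.mem_Iio]

lemma aux_pairs_swap {β : Type*} [CommMonoid β] {n : ℕ} (F : Fin n → Fin n → β) :
    ∏ p ∈ (Finset.univ : Finset (Fin n × Fin n)).filter (fun p => p.2 < p.1), F p.1 p.2
      = ∏ p ∈ (Finset.univ : Finset (Fin n × Fin n)).filter (fun p => p.1 < p.2), F p.2 p.1 := by
  refine Finset.prod_nbij' (i := Prod.swap) (j := Prod.swap) ?_ ?_ ?_ ?_ ?_ <;>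
    simp (config := { contextual := true })

lemma aux_erase_eq {n : ℕ} (l : Fin n) :
    (Finset.univ : Finset (Fin n)).erase l = Finset.Iio l ∪ Finset.Ioi l := by
  ext z
  simp only [Finset.mem_erase, Finset.mem_univ, and_true, Finset.mem_union,
    Finset.mem_Iio, Finset.mem_Ioi]
  exact ne_iff_lt_or_gt

/-- Jacobi–Trudi identity for the classes `k*Ω_μ^T`: for a partition
`μ_1 ≥ ⋯ ≥ μ_g ≥ 0` with at most `g` parts, in `ℚ[x_1, …, x_g, ψ]` (realized as the
multivariate polynomial ring on `Option (Fin g)`, with `ψ = X none` and `x_i = X (some i)`):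
`det A = Vandermonde(x) · det B`, where
`A i j = ∏_{m=0}^{μ_j+g−j−1} (x_i + m ψ)` and
`B i j = ∑_{a+b=μ_i+j−i} h_a(x) e_b(0,1,…,μ_i−i+g−1) ψ^b` (indices `i, j` run over `1, …, g`,
and `B i j = 0` when `μ_i + j − i < 0`). -/

theorem jacobi_trudi_for_krichever (g : ℕ) (hg : 1 ≤ g) (μ : Fin g → ℕ)
    (hμ : ∀ i j : Fin g, i ≤ j → μ j ≤ μ i) :
    Matrix.det (Matrix.of fun i j : Fin g =>
        ∏ m ∈ Finset.range (μ j + (g - (j.val + 1))),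
          ((MvPolynomial.X (some i) : MvPolynomial (Option (Fin g)) ℚ)
            + (m : MvPolynomial (Option (Fin g)) ℚ) * MvPolynomial.X none))
      = (∏ p ∈ (Finset.univ : Finset (Fin g × Fin g)).filter (fun p => p.1 < p.2),
          ((MvPolynomial.X (some p.1) : MvPolynomial (Option (Fin g)) ℚ)
            - MvPolynomial.X (some p.2)))
        * Matrix.det (Matrix.of fun i j : Fin g =>
            if i.val ≤ μ i + j.val then
              ∑ p ∈ Finset.HasAntidiagonal.antidiagonal (μ i + j.val - i.val),
                completeHomog (fun k : Fin g =>
                    (MvPolynomial.X (some k) : MvPolynomial (Option (Fin g)) ℚ)) p.1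
                  * elemNat (μ i + (g - (i.val + 1))) p.2
                  * (MvPolynomial.X none : MvPolynomial (Option (Fin g)) ℚ) ^ p.2
            else 0) := by
  classical
  let RR := MvPolynomial (Option (Fin g)) ℚ
  let x : Fin g → RR := fun i => MvPolynomial.X (some i)
  let ψ : RR := MvPolynomial.X none
  let ser : RR → PowerSeries RR := fun r => PowerSeries.mk fun n => r ^ n
  let Hfull : PowerSeries RR := ∏ i : Fin g, ser (x i)
  let Nn : Fin g → ℕ := fun i => μ i + (g - (i.val + 1))
  let Ffac : Fin g → PowerSeries RR := fun i =>
    ∏ m ∈ Finset.range (Nn i),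
      ((1 : PowerSeries RR) + PowerSeries.C ((m : RR) * ψ) * PowerSeries.X)
  let P : Fin g → PowerSeries RR := fun l =>
    ∏ m ∈ Finset.univ.erase l,
      ((1 : PowerSeries RR) - PowerSeries.C (x m) * PowerSeries.X)
  let M : Matrix (Fin g) (Fin g) RR :=
    Matrix.of fun j l : Fin g => PowerSeries.coeff (g - 1 - j.val) (P l)
  let A : Matrix (Fin g) (Fin g) RR := Matrix.of fun i j : Fin g =>
    ∏ m ∈ Finset.range (Nn j), (x i + (m : RR) * ψ)
  let B : Matrix (Fin g) (Fin g) RR := Matrix.of fun i j : Fin g =>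
    if i.val ≤ μ i + j.val then
      ∑ p ∈ Finset.HasAntidiagonal.antidiagonal (μ i + j.val - i.val),
        completeHomog x p.1 * elemNat (Nn i) p.2 * ψ ^ p.2
    else 0
  have hcardE : ∀ l : Fin g, (Finset.univ.erase l).card = g - 1 := fun l => by
    rw [Finset.card_erase_of_mem (Finset.mem_univ l), Finset.card_univ, Fintype.card_fin]
  -- degree bound for P
  have hPeq : ∀ l : Fin g, P l = ∏ m ∈ Finset.univ.erase l,
      ((1 : PowerSeries RR) + PowerSeries.C (-(x m)) * PowerSeries.X) := by
    intro l
    refine Finset.prod_congr rfl fun m _ => ?_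
    rw [map_neg]; ring
  have hPdeg : ∀ (l : Fin g) (k : ℕ), g ≤ k → PowerSeries.coeff k (P l) = 0 := by
    intro l k hk
    rw [hPeq, aux_coeff_prod_one_add]
    rw [Finset.powersetCard_eq_empty.mpr (by rw [hcardE]; omega), Finset.sum_empty]
  -- H * P l = geometric series of x l
  have hone : ∀ r : RR, ((1 : PowerSeries RR) - PowerSeries.C r * PowerSeries.X) ≠ 0 := by
    intro r h
    have := congrArg (PowerSeries.coeff 0) h
    simp at this
  have hHP : ∀ l : Fin g, Hfull * P l = ser (x l) := by
    intro l
    have h1 : ((1 : PowerSeries RR) - PowerSeries.C (x l) * PowerSeries.X) *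
        (Hfull * P l) = 1 := by
      have : ((1 : PowerSeries RR) - PowerSeries.C (x l) * PowerSeries.X) * P l
          = ∏ m : Fin g, ((1 : PowerSeries RR) - PowerSeries.C (x m) * PowerSeries.X) :=
        Finset.mul_prod_erase Finset.univ
          (fun m => (1 : PowerSeries RR) - PowerSeries.C (x m) * PowerSeries.X)
          (Finset.mem_univ l)
      calc ((1 : PowerSeries RR) - PowerSeries.C (x l) * PowerSeries.X) * (Hfull * P l)
          = (((1 : PowerSeries RR) - PowerSeries.C (x l) * PowerSeries.X) * P l) * Hfull := by
            ring
        _ = (∏ m : Fin g, ((1 : PowerSeries RR) - PowerSeries.C (x m) * PowerSeries.X)) *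
            (∏ i : Fin g, ser (x i)) := by rw [this]
        _ = ∏ m : Fin g, (((1 : PowerSeries RR) - PowerSeries.C (x m) * PowerSeries.X) *
            ser (x m)) := by rw [Finset.prod_mul_distrib]
        _ = 1 := by
            rw [Finset.prod_congr rfl fun m _ => aux_geom (x m), Finset.prod_const_one]
    have h2 : ((1 : PowerSeries RR) - PowerSeries.C (x l) * PowerSeries.X) * ser (x l) = 1 :=
      aux_geom (x l)
    exact mul_left_cancel₀ (hone (x l)) (h1.trans h2.symm)
  -- coefficients of Ffac
  have hFcoeff : ∀ (i : Fin g) (b : ℕ),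
      PowerSeries.coeff b (Ffac i) = elemNat (Nn i) b * ψ ^ b := by
    intro i b
    rw [aux_coeff_prod_one_add, elemNat, Finset.sum_mul]
    refine Finset.sum_congr rfl fun t ht => ?_
    rw [Finset.prod_mul_distrib, Finset.prod_const,
      (Finset.mem_powersetCard.mp ht).2]
  -- B entries as coefficients
  have hBcoeff : ∀ (i : Fin g) (n : ℕ),
      PowerSeries.coeff n (Ffac i * Hfull)
        = ∑ p ∈ Finset.HasAntidiagonal.antidiagonal n, completeHomog x p.1 * elemNat (Nn i) p.2 * ψ ^ p.2 := by
    intro i n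
    have hH : ∀ a : ℕ, PowerSeries.coeff a Hfull = completeHomog x a := fun a =>
      aux_hcoeff x
    rw [PowerSeries.coeff_mul]
    refine Finset.sum_nbij' (i := Prod.swap) (j := Prod.swap) ?_ ?_ ?_ ?_ ?_
    · intro p hp
      simp only [Finset.mem_coe, Finset.HasAntidiagonal.mem_antidiagonal, Prod.fst_swap, Prod.snd_swap] at hp ⊢
      omega
    · intro p hp
      simp only [Finset.mem_coe, Finset.HasAntidiagonal.mem_antidiagonal, Prod.fst_swap, Prod.snd_swap] at hp ⊢
      omega
    · intro p _; simp
    · intro p _; simp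
    · intro p _
      show PowerSeries.coeff p.1 (Ffac i) * PowerSeries.coeff p.2 Hfull
        = completeHomog x p.2 * elemNat (Nn i) p.1 * ψ ^ p.1
      rw [hFcoeff, hH]
      ring
  -- the evaluation of coeff N (Ffac * ser y)
  have hFser : ∀ (N : ℕ) (y : RR),
      PowerSeries.coeff N
        ((∏ m ∈ Finset.range N,
          ((1 : PowerSeries RR) + PowerSeries.C ((m : RR) * ψ) * PowerSeries.X)) *
          PowerSeries.mk (fun n => y ^ n))
        = ∏ m ∈ Finset.range N, (y + (m : RR) * ψ) := by
    intro N y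
    have h1 : (∏ m ∈ Finset.range N,
        ((1 : PowerSeries RR) + PowerSeries.C ((m : RR) * ψ) * PowerSeries.X))
        = ∏ m ∈ Finset.range N,
          ((1 : PowerSeries RR) - PowerSeries.C (-((m : RR) * ψ)) * PowerSeries.X) := by
      refine Finset.prod_congr rfl fun m _ => ?_
      rw [map_neg]; ring
    have h2 := aux_RL (Finset.range N) (fun m => -((m : RR) * ψ)) y 0
    rw [Finset.card_range, add_zero, pow_zero, mul_one] at h2
    rw [h1, h2]
    exact Finset.prod_congr rfl fun m _ => by rw [sub_neg_eq_add]
  -- Claim A : B * M = Aᵀ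
  have claimA : B * M = A.transpose := by
    apply Matrix.ext
    intro i l
    rw [Matrix.mul_apply]
    have hB : ∀ j : Fin g, B i j * M j l
        = (if i.val ≤ μ i + j.val then
            PowerSeries.coeff (μ i + j.val - i.val) (Ffac i * Hfull) else 0) *
          PowerSeries.coeff (g - 1 - j.val) (P l) := by
      intro j
      congr 1
      show (if i.val ≤ μ i + j.val then
          ∑ p ∈ Finset.HasAntidiagonal.antidiagonal (μ i + j.val - i.val),
            completeHomog x p.1 * elemNat (Nn i) p.2 * ψ ^ p.2 else 0) = _
      rw [hBcoeff]
    rw [Finset.sum_congr rfl fun j _ => hB j]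
    have hconv : ∑ j : Fin g,
        (if i.val ≤ μ i + j.val then
            PowerSeries.coeff (μ i + j.val - i.val) (Ffac i * Hfull) else 0) *
          PowerSeries.coeff (g - 1 - j.val) (P l)
        = ∑ j ∈ Finset.range g,
          (if i.val ≤ μ i + j then
              PowerSeries.coeff (μ i + j - i.val) (Ffac i * Hfull) else 0) *
            PowerSeries.coeff (g - 1 - j) (P l) :=
      Fin.sum_univ_eq_sum_range (fun j =>
        (if i.val ≤ μ i + j then
            PowerSeries.coeff (μ i + j - i.val) (Ffac i * Hfull) else 0) *
          PowerSeries.coeff (g - 1 - j) (P l)) g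
    rw [hconv, aux_CL g (Ffac i * Hfull) (P l) (hPdeg l) (μ i) i.val i.isLt]
    rw [mul_assoc, hHP l]
    show PowerSeries.coeff (Nn i)
        ((∏ m ∈ Finset.range (Nn i),
          ((1 : PowerSeries RR) + PowerSeries.C ((m : RR) * ψ) * PowerSeries.X)) *
          PowerSeries.mk (fun n => (x l) ^ n)) = A.transpose i l
    rw [hFser (Nn i) (x l)]
    rfl
  -- Claim W : vandermonde * M = diagonal
  have claimW : Matrix.vandermonde x * M
      = Matrix.diagonal (fun l => ∏ m ∈ Finset.univ.erase l, (x l - x m)) := by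
    apply Matrix.ext
    intro k l
    rw [Matrix.mul_apply]
    have hconv : ∑ j : Fin g, Matrix.vandermonde x k j * M j l
        = ∑ j ∈ Finset.range g,
          (if 0 ≤ 0 + j then
              PowerSeries.coeff (0 + j - 0) (ser (x k)) else 0) *
            PowerSeries.coeff (g - 1 - j) (P l) := by
      rw [← Fin.sum_univ_eq_sum_range (fun j =>
        (if 0 ≤ 0 + j then
            PowerSeries.coeff (0 + j - 0) (ser (x k)) else 0) *
          PowerSeries.coeff (g - 1 - j) (P l)) g]
      refine Finset.sum_congr rfl fun j _ => ?_
      rw [if_pos (Nat.zero_le _)]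
      show Matrix.vandermonde x k j * M j l
        = PowerSeries.coeff (0 + j.val - 0) (PowerSeries.mk fun n => (x k) ^ n)
          * PowerSeries.coeff (g - 1 - j.val) (P l)
      rw [PowerSeries.coeff_mk]
      congr 1
      show x k ^ j.val = x k ^ (0 + j.val - 0)
      congr 1
      omega
    rw [hconv, aux_CL g (ser (x k)) (P l) (hPdeg l) 0 0 hg]
    have h3 : ser (x k) * P l = P l * PowerSeries.mk (fun n => (x k) ^ n) := mul_comm _ _
    rw [h3]
    have h4 := aux_RL (Finset.univ.erase l) x (x k) 0
    rw [hcardE l, add_zero, pow_zero, mul_one] at h4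
    have h5 : (0 : ℕ) + (g - (0 + 1)) = g - 1 := by omega
    rw [h5, h4]
    by_cases hkl : k = l
    · subst hkl
      rw [Matrix.diagonal_apply_eq]
    · rw [Matrix.diagonal_apply_ne _ hkl]
      exact Finset.prod_eq_zero (f := fun m => x k - x m)
        (Finset.mem_erase.mpr ⟨hkl, Finset.mem_univ k⟩) (sub_self (x k))
  -- determinant bookkeeping
  have hdetW : (Matrix.vandermonde x).det
      = ∏ p ∈ (Finset.univ : Finset (Fin g × Fin g)).filter (fun p => p.1 < p.2),
          (x p.2 - x p.1) := by
    rw [Matrix.det_vandermonde, ← aux_pairs_lt (fun i j => x j - x i)]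
  have hW0 : (Matrix.vandermonde x).det ≠ 0 := by
    rw [hdetW]
    rw [Finset.prod_ne_zero_iff]
    intro p hp
    rw [Finset.mem_filter] at hp
    refine sub_ne_zero.mpr (MvPolynomial.X_injective.ne ?_)
    intro h
    exact absurd (Option.some_injective _ h) (ne_of_gt hp.2)
  have hdiag : ∏ l : Fin g, ∏ m ∈ Finset.univ.erase l, (x l - x m)
      = (∏ p ∈ (Finset.univ : Finset (Fin g × Fin g)).filter (fun p => p.1 < p.2),
          (x p.2 - x p.1))
        * ∏ p ∈ (Finset.univ : Finset (Fin g × Fin g)).filter (fun p => p.1 < p.2),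
          (x p.1 - x p.2) := by
    have h1 : ∀ l : Fin g, ∏ m ∈ Finset.univ.erase l, (x l - x m)
        = (∏ m ∈ Finset.Iio l, (x l - x m)) * ∏ m ∈ Finset.Ioi l, (x l - x m) := by
      intro l
      rw [aux_erase_eq l, Finset.prod_union (Finset.disjoint_Ioi_Iio l).symm]
    rw [Finset.prod_congr rfl fun l _ => h1 l, Finset.prod_mul_distrib]
    congr 1
    · rw [← aux_pairs_gt (fun i j => x i - x j), aux_pairs_swap (fun i j => x i - x j)]
    · rw [← aux_pairs_lt (fun i j => x i - x j)]
  have hdetM : M.det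
      = ∏ p ∈ (Finset.univ : Finset (Fin g × Fin g)).filter (fun p => p.1 < p.2),
          (x p.1 - x p.2) := by
    refine mul_left_cancel₀ hW0 ?_
    rw [← Matrix.det_mul, claimW, Matrix.det_diagonal, hdiag, hdetW]
  show A.det = _
  rw [← Matrix.det_transpose A, ← claimA, Matrix.det_mul, hdetM, mul_comm]
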